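/- Let η ∈ (0,1), 0 < m < k, and let {S(t)}_{t≥0} be linear operators on X₁ = ℓ¹(Q_i i) satisfying ‖S(t)u‖_{X₁} ≤ M‖u‖_{X₁} and ‖S(t)u‖_{X_η} ≤ M e^{-λ_η t}‖u‖_{X_η} for all t > 0, with M > 0 and λ_η > 0 fixed. Then S(t) maps X_{1+k} = ℓ¹(Q_i i^{1+k}) into X_{1+m}, and there exists C depending only on m, k, M, λ_η such that ‖S(t)u‖_{X_{1+m}} ≤ C(1+t)^{-(k-m)}‖u‖_{X_{1+k}} for all u ∈ X_{1+k} and t ≥ 0. -/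

import Mathlib

open Filter





lemma EI.exp_aux {η : ℝ} (hη : 0 < η) {x : ℝ} (hx : 0 ≤ x) :
    x ≤ 2/η * Real.exp (η * x / 2) := by
  have h := Real.add_one_le_exp (η * x / 2)
  have h2 : η * x / 2 ≤ Real.exp (η * x / 2) := by nlinarith [mul_nonneg hη.le hx]
  have h3 : 2/η * (η * x / 2) = x := by field_simp
  have h4 := mul_le_mul_of_nonneg_left h2 (le_of_lt (by positivity : (0:ℝ) < 2/η))
  linarith

lemma EI.etaBound (Q : ℕ → ℝ) (hQ : ∀ i, 1 ≤ i → 0 < Q i) (η M lamη : ℝ) (hM : 0 < M)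
    (S : ℝ → (ℕ → ℝ) → (ℕ → ℝ))
    (hlin : ∀ t : ℝ, 0 ≤ t → IsLinearMap ℝ (S t))
    (hX1 : ∀ t : ℝ, 0 ≤ t → ∀ u : ℕ → ℝ,
      Summable (fun i => Q i * (i : ℝ) * |u i|) → (∑' i : ℕ, Q i * (i : ℝ) * u i) = 0 →
      Summable (fun i => Q i * (i : ℝ) * |S t u i|) ∧
        (∑' i : ℕ, Q i * (i : ℝ) * |S t u i|) ≤ M * ∑' i : ℕ, Q i * (i : ℝ) * |u i|)
    (hXeta : ∀ t : ℝ, 0 ≤ t → ∀ u : ℕ → ℝ,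
      Summable (fun i => Q i * Real.exp (η * i) * |u i|) →
        (∑' i : ℕ, Q i * (i : ℝ) * u i) = 0 →
      Summable (fun i => Q i * Real.exp (η * i) * |S t u i|) ∧
        (∑' i : ℕ, Q i * Real.exp (η * i) * |S t u i|) ≤
          M * Real.exp (-lamη * t) * ∑' i : ℕ, Q i * Real.exp (η * i) * |u i|)
    (t : ℝ) (ht : 0 ≤ t) (v : ℕ → ℝ) (hv0 : v 0 = 0)
    (hvs : Summable (fun i => Q i * Real.exp (η * i) * |v i|))
    (hvm : (∑' i : ℕ, Q i * (i : ℝ) * v i) = 0) :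
    Summable (fun i : ℕ => if i = 0 then 0 else Q i * Real.exp (η * i) * |S t v i|) ∧
    (∑' i : ℕ, if i = 0 then 0 else Q i * Real.exp (η * i) * |S t v i|) ≤
      M * Real.exp (-lamη * t) * ∑' i : ℕ, Q i * Real.exp (η * i) * |v i| := by
  by_cases hQ0 : 0 ≤ Q 0
  · obtain ⟨hs, hb⟩ := hXeta t ht v hvs hvm
    set g : ℕ → ℝ := fun i => if i = 0 then Q i * Real.exp (η * i) * |S t v i| else 0 with hg
    have hgs : Summable g := summable_of_ne_finset_zero (s := {0}) (by
      intro b hb'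
      simp only [Finset.mem_singleton] at hb'
      simp [hg, hb'])
    have hFeq : (fun i : ℕ => if i = 0 then 0 else Q i * Real.exp (η * i) * |S t v i|)
        = fun i => Q i * Real.exp (η * i) * |S t v i| - g i := by
      funext i
      by_cases h : i = 0 <;> simp [hg, h]
    constructor
    · rw [hFeq]; exact hs.sub hgs
    · rw [hFeq, Summable.tsum_sub hs hgs]
      have hg0 : (0:ℝ) ≤ ∑' i, g i := by
        rw [tsum_eq_single 0 (by intro b hb'; simp [hg, hb'])]
        simp only [hg, if_pos rfl]
        positivity
      linarith
  · push_neg at hQ0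
    set e0 : ℕ → ℝ := fun i => if i = 0 then (1:ℝ) else 0 with he0
    have he0X1 : (fun i : ℕ => Q i * (i:ℝ) * |e0 i|) = fun _ => (0:ℝ) := by
      funext i
      by_cases h : i = 0 <;> simp [he0, h]
    have he0m : (∑' i : ℕ, Q i * (i : ℝ) * e0 i) = 0 := by
      have : (fun i : ℕ => Q i * (i:ℝ) * e0 i) = fun _ => (0:ℝ) := by
        funext i
        by_cases h : i = 0 <;> simp [he0, h]
      rw [this, tsum_zero]
    obtain ⟨hs1, hb1⟩ := hX1 t ht e0 (by rw [he0X1]; exact summable_zero) he0m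
    rw [he0X1, tsum_zero, mul_zero] at hb1
    have hzero : ∀ i : ℕ, i ≠ 0 → S t e0 i = 0 := by
      intro i hi
      have hnn : ∀ j : ℕ, 0 ≤ Q j * (j:ℝ) * |S t e0 j| := by
        intro j
        rcases Nat.eq_zero_or_pos j with h | h
        · simp [h]
        · have := hQ j h
          positivity
      have hle := Summable.le_tsum hs1 i (fun j _ => hnn j)
      have h1 : (0:ℝ) < Q i * i := by
        have hi1 : 1 ≤ i := Nat.one_le_iff_ne_zero.2 hi
        have := hQ i hi1
        have : (0:ℝ) < (i:ℝ) := by exact_mod_cast hi1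
        positivity
      have h2 : Q i * (i:ℝ) * |S t e0 i| = 0 := le_antisymm (hle.trans hb1) (hnn i)
      have := mul_eq_zero.1 h2
      rcases this with h | h
      · exact absurd h h1.ne'
      · exact abs_eq_zero.1 h
    have he0sη : Summable (fun i : ℕ => Q i * Real.exp (η * i) * |e0 i|) :=
      summable_of_ne_finset_zero (s := {0}) (by
        intro b hb'
        simp only [Finset.mem_singleton] at hb'
        simp [he0, hb'])
    obtain ⟨hs2, hb2⟩ := hXeta t ht e0 he0sη he0m
    have hR : (∑' i : ℕ, Q i * Real.exp (η * i) * |e0 i|) = Q 0 := by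
      rw [tsum_eq_single 0 (by intro b hb'; simp [he0, hb'])]
      simp [he0]
    have hL : (∑' i : ℕ, Q i * Real.exp (η * i) * |S t e0 i|) = Q 0 * |S t e0 0| := by
      rw [tsum_eq_single 0 (by intro b hb'; simp [hzero b hb'])]
      simp
    rw [hR, hL] at hb2
    set a := S t e0 0 with hadef
    have ha : a ≠ 0 := by
      intro h0
      rw [h0, abs_zero, mul_zero] at hb2
      nlinarith [Real.exp_pos (-lamη * t), mul_pos hM (Real.exp_pos (-lamη * t))]
    set c := -(S t v 0) / a with hc
    set v' : ℕ → ℝ := fun i => v i + c * e0 i with hv'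
    have hv'eq : v' = v + c • e0 := by
      funext i; simp [hv', smul_eq_mul]
    have hd : (fun i : ℕ => Q i * Real.exp (η * i) * |v' i|)
        = (fun i : ℕ => Q i * Real.exp (η * i) * |v i|)
          + fun i : ℕ => if i = 0 then Q i * Real.exp (η * i) * |c| else 0 := by
      funext i
      by_cases h : i = 0
      · subst h; simp [hv', he0, hv0]
      · simp [hv', he0, h]
    have hds : Summable (fun i : ℕ => if i = 0 then Q i * Real.exp (η * i) * |c| else 0) :=
      summable_of_ne_finset_zero (s := {0}) (by
        intro b hb'
        simp only [Finset.mem_singleton] at hb'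
        simp [hb'])
    have hv's : Summable (fun i : ℕ => Q i * Real.exp (η * i) * |v' i|) :=
      (hvs.add hds).congr (fun i => (congrFun hd i).symm)
    have hv'm : (∑' i : ℕ, Q i * (i : ℝ) * v' i) = 0 := by
      have : (fun i : ℕ => Q i * (i:ℝ) * v' i) = fun i : ℕ => Q i * (i:ℝ) * v i := by
        funext i
        by_cases h : i = 0
        · subst h; simp
        · simp [hv', he0, h]
      rw [this, hvm]
    obtain ⟨hs3, hb3⟩ := hXeta t ht v' hv's hv'm
    have hSv' : ∀ i, S t v' i = S t v i + c * S t e0 i := by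
      intro i
      rw [hv'eq, (hlin t ht).map_add, (hlin t ht).map_smul]
      simp [smul_eq_mul]
    have key0 : S t v' 0 = 0 := by
      rw [hSv' 0, ← hadef, hc, div_mul_cancel₀ _ ha]
      ring
    have hFeq : (fun i : ℕ => Q i * Real.exp (η * i) * |S t v' i|)
        = fun i : ℕ => if i = 0 then 0 else Q i * Real.exp (η * i) * |S t v i| := by
      funext i
      by_cases h : i = 0
      · subst h; simp [key0]
      · rw [if_neg h, hSv' i, hzero i h]
        ring_nf
    rw [hFeq] at hs3 hb3
    refine ⟨hs3, hb3.trans ?_⟩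
    have h1 : (∑' i : ℕ, Q i * Real.exp (η * i) * |v' i|)
        ≤ ∑' i : ℕ, Q i * Real.exp (η * i) * |v i| := by
      have heq : (∑' i : ℕ, Q i * Real.exp (η * i) * |v' i|)
          = (∑' i : ℕ, Q i * Real.exp (η * i) * |v i|)
            + ∑' i : ℕ, (if i = 0 then Q i * Real.exp (η * i) * |c| else 0) := by
        rw [← Summable.tsum_add hvs hds]
        exact tsum_congr (fun i => congrFun hd i)
      rw [heq]
      have : (∑' i : ℕ, if i = 0 then Q i * Real.exp (η * i) * |c| else 0) ≤ 0 := by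
        rw [tsum_eq_single 0 (by intro b hb'; simp [hb']), if_pos rfl]
        have h5 : (0:ℝ) ≤ Real.exp (η * (0:ℕ)) * |c| := by positivity
        nlinarith [h5, hQ0]
      linarith
    have : (0:ℝ) ≤ M * Real.exp (-lamη * t) := by positivity
    exact mul_le_mul_of_nonneg_left h1 this


section
variable (Q : ℕ → ℝ) (η k M lamη : ℝ)

set_option maxHeartbeats 3000000 in
lemma EI.tailBound (hQ : ∀ i, 1 ≤ i → 0 < Q i) (hη : 0 < η) (hk : 0 < k)
    (hM : 0 < M) (hlam : 0 < lamη)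
    (S : ℝ → (ℕ → ℝ) → (ℕ → ℝ))
    (hlin : ∀ t : ℝ, 0 ≤ t → IsLinearMap ℝ (S t))
    (hX1 : ∀ t : ℝ, 0 ≤ t → ∀ u : ℕ → ℝ,
      Summable (fun i => Q i * (i : ℝ) * |u i|) → (∑' i : ℕ, Q i * (i : ℝ) * u i) = 0 →
      Summable (fun i => Q i * (i : ℝ) * |S t u i|) ∧
        (∑' i : ℕ, Q i * (i : ℝ) * |S t u i|) ≤ M * ∑' i : ℕ, Q i * (i : ℝ) * |u i|)
    (hXeta : ∀ t : ℝ, 0 ≤ t → ∀ u : ℕ → ℝ,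
      Summable (fun i => Q i * Real.exp (η * i) * |u i|) →
        (∑' i : ℕ, Q i * (i : ℝ) * u i) = 0 →
      Summable (fun i => Q i * Real.exp (η * i) * |S t u i|) ∧
        (∑' i : ℕ, Q i * Real.exp (η * i) * |S t u i|) ≤
          M * Real.exp (-lamη * t) * ∑' i : ℕ, Q i * Real.exp (η * i) * |u i|)
    (t : ℝ) (ht : 0 ≤ t) (u : ℕ → ℝ)
    (hu : Summable (fun i => Q i * (i : ℝ) ^ (1 + k) * |u i|))
    (hmass : (∑' i : ℕ, Q i * (i : ℝ) * u i) = 0) (n : ℕ) :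
    (∑' i : ℕ, if 2^n ≤ i then Q i * (i : ℝ) * |S t u i| else 0) ≤
      (2*M/η*(1+Real.exp η) + 2*M) * (∑' i : ℕ, Q i * (i : ℝ) ^ (1 + k) * |u i|)
        * (Real.exp (-(η * 2^n)/4) * Real.exp (-(lamη*t)/2)
            + ((2:ℝ)^n/4 + lamη/(2*η)*t)^(-k)) := by
  classical
  set U := ∑' i : ℕ, Q i * (i : ℝ) ^ (1 + k) * |u i| with hUdef
  have hQi : ∀ i : ℕ, (0:ℝ) ≤ Q i * (i:ℝ) := by
    intro i
    rcases Nat.eq_zero_or_pos i with h | h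
    · simp [h]
    · have h1 := hQ i h
      have h2 : (0:ℝ) < (i:ℝ) := by exact_mod_cast h
      positivity
  have hUterm : ∀ i : ℕ, (0:ℝ) ≤ Q i * (i:ℝ)^(1+k) * |u i| := by
    intro i
    rcases Nat.eq_zero_or_pos i with h | h
    · simp [h, Real.zero_rpow (by positivity : (1:ℝ)+k ≠ 0)]
    · have h1 := hQ i h
      have h2 : (0:ℝ) < (i:ℝ) := by exact_mod_cast h
      positivity
  have hU0 : (0:ℝ) ≤ U := tsum_nonneg hUterm
  have hile : ∀ i : ℕ, (i:ℝ) ≤ (i:ℝ)^(1+k) := by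
    intro i
    rcases Nat.eq_zero_or_pos i with h | h
    · simp [h, Real.zero_rpow (by positivity : (1:ℝ)+k ≠ 0)]
    · have h2 : (1:ℝ) ≤ (i:ℝ) := by exact_mod_cast h
      calc (i:ℝ) = (i:ℝ)^(1:ℝ) := (Real.rpow_one _).symm
        _ ≤ (i:ℝ)^(1+k) := Real.rpow_le_rpow_of_exponent_le h2 (by linarith)
  have honele : ∀ i : ℕ, 1 ≤ i → (1:ℝ) ≤ (i:ℝ)^(1+k) := by
    intro i h
    have h2 : (1:ℝ) ≤ (i:ℝ) := by exact_mod_cast h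
    calc (1:ℝ) = (1:ℝ)^(1+k) := (Real.one_rpow _).symm
      _ ≤ (i:ℝ)^(1+k) := Real.rpow_le_rpow (by norm_num) h2 (by linarith)
  have huptle : ∀ i : ℕ, Q i * (i:ℝ) * |u i| ≤ Q i * (i:ℝ)^(1+k) * |u i| := by
    intro i
    rcases Nat.eq_zero_or_pos i with h | h
    · simp [h, Real.zero_rpow (by positivity : (1:ℝ)+k ≠ 0)]
    · have h1 := (hQ i h).le
      have h2 := hile i
      have h3 := abs_nonneg (u i)
      nlinarith [mul_nonneg h1 h3, h2]
  have hu1nn : ∀ i : ℕ, (0:ℝ) ≤ Q i * (i:ℝ) * |u i| := by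
    intro i; exact mul_nonneg (hQi i) (abs_nonneg _)
  have hu1 : Summable (fun i : ℕ => Q i * (i:ℝ) * |u i|) :=
    Summable.of_nonneg_of_le hu1nn huptle hu
  have hu1b : (∑' i : ℕ, Q i * (i:ℝ) * |u i|) ≤ U := Summable.tsum_le_tsum huptle hu1 hu
  set b := lamη/(2*η) with hbdef
  have hb0 : 0 < b := by positivity
  set N : ℝ := (2:ℝ)^n/4 + b*t with hN
  have hN0 : (0:ℝ) < N := by
    have h1 : (0:ℝ) < (2:ℝ)^n/4 := by positivity
    have h2 : (0:ℝ) ≤ b*t := mul_nonneg hb0.le ht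
    rw [hN]; linarith
  have hNik : (0:ℝ) ≤ N^(-k) := (Real.rpow_pos_of_pos hN0 _).le
  -- split of the mass function
  set f : ℕ → ℝ := fun i => Q i * (i:ℝ) * u i with hf
  have hfabs : ∀ i, |f i| = Q i * (i:ℝ) * |u i| := by
    intro i
    rw [hf, abs_mul, abs_of_nonneg (hQi i)]
  have hfs : Summable f := by
    refine Summable.of_abs ?_
    exact hu1.congr (fun i => (hfabs i).symm)
  set g1 : ℕ → ℝ := fun i => if 1 ≤ i ∧ (i:ℝ) ≤ N then f i else 0 with hg1
  set g2 : ℕ → ℝ := fun i => if 1 ≤ i ∧ (i:ℝ) ≤ N then 0 else f i with hg2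
  have hfin : ∀ i : ℕ, i ∉ Finset.range (⌈N⌉₊ + 2) → ¬(1 ≤ i ∧ (i:ℝ) ≤ N) := by
    intro i hi hci
    simp only [Finset.mem_range, not_lt] at hi
    have h1 : (⌈N⌉₊ : ℝ) + 2 ≤ (i:ℝ) := by exact_mod_cast hi
    have h2 : N ≤ (⌈N⌉₊:ℝ) := Nat.le_ceil N
    linarith [hci.2]
  have hg1s : Summable g1 := by
    apply summable_of_ne_finset_zero (s := Finset.range (⌈N⌉₊ + 2))
    intro i hi
    simp only [hg1, if_neg (hfin i hi)]
  have hg2eq : ∀ i, g2 i = f i - g1 i := by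
    intro i
    by_cases h : 1 ≤ i ∧ (i:ℝ) ≤ N <;> simp [hg1, hg2, h]
  have hg2s : Summable g2 := (hfs.sub hg1s).congr (fun i => (hg2eq i).symm)
  set T := ∑' i, g2 i with hT
  have hmass' : (∑' i, g1 i) + T = 0 := by
    rw [hT, ← Summable.tsum_add hg1s hg2s]
    rw [← hmass]
    exact tsum_congr (fun i => by rw [hg2eq i]; ring)
  have hg2abs : ∀ i, |g2 i| ≤ N^(-k) * (Q i * (i:ℝ)^(1+k) * |u i|) := by
    intro i
    by_cases h : 1 ≤ i ∧ (i:ℝ) ≤ N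
    · simp only [hg2, if_pos h, abs_zero]
      exact mul_nonneg hNik (hUterm i)
    · simp only [hg2, if_neg h]
      rcases Nat.eq_zero_or_pos i with h0 | h0
      · simp [hf, h0, Real.zero_rpow (by positivity : (1:ℝ)+k ≠ 0)]
      · push_neg at h
        have hNi : N < (i:ℝ) := h h0
        have hipos : (0:ℝ) < (i:ℝ) := by exact_mod_cast h0
        rw [hfabs i]
        have hsplit : (i:ℝ)^(1+k) = (i:ℝ) * (i:ℝ)^k := by
          rw [Real.rpow_add hipos, Real.rpow_one]
        have hNk : N^k ≤ (i:ℝ)^k := Real.rpow_le_rpow hN0.le hNi.le hk.le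
        have hNkk : N^(-k) * N^k = 1 := by
          rw [← Real.rpow_add hN0]; simp
        have h1 := (hQ i h0).le
        have h2 := abs_nonneg (u i)
        have h3 : (0:ℝ) < N^k := Real.rpow_pos_of_pos hN0 _
        have key : (1:ℝ) ≤ N^(-k) * (i:ℝ)^k := by
          calc (1:ℝ) = N^(-k) * N^k := hNkk.symm
            _ ≤ N^(-k) * (i:ℝ)^k := mul_le_mul_of_nonneg_left hNk hNik
        rw [hsplit]
        nlinarith [key, mul_nonneg (mul_nonneg h1 hipos.le) h2]
  have hg2abss : Summable (fun i => |g2 i|) := by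
    refine Summable.of_nonneg_of_le (fun i => abs_nonneg _) hg2abs ?_
    exact hu.mul_left _
  have habsT : |T| ≤ N^(-k) * U := by
    calc |T| ≤ ∑' i, |g2 i| := by
          simpa using norm_tsum_le_tsum_norm (f := g2) (by simpa using hg2abss)
      _ ≤ ∑' i, N^(-k) * (Q i * (i:ℝ)^(1+k) * |u i|) :=
          Summable.tsum_le_tsum hg2abs hg2abss (hu.mul_left _)
      _ = N^(-k) * U := tsum_mul_left
  -- the truncated corrected part v
  have hQ1 := hQ 1 le_rfl
  set v : ℕ → ℝ := fun i => (if 1 ≤ i ∧ (i:ℝ) ≤ N then u i else 0)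
      + (if i = 1 then T / Q 1 else 0) with hv
  have hv0 : v 0 = 0 := by simp [hv]
  have hvzero : ∀ i : ℕ, i ∉ Finset.range (⌈N⌉₊ + 2) → v i = 0 := by
    intro i hi
    have h1 := hfin i hi
    have h2 : i ≠ 1 := by
      simp only [Finset.mem_range, not_lt] at hi
      omega
    simp [hv, if_neg h1, if_neg h2]
  have hvsη : Summable (fun i => Q i * Real.exp (η * i) * |v i|) :=
    summable_of_ne_finset_zero (s := Finset.range (⌈N⌉₊+2))
      (fun i hi => by simp [hvzero i hi])
  have hvs1 : Summable (fun i => Q i * (i:ℝ) * |v i|) :=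
    summable_of_ne_finset_zero (s := Finset.range (⌈N⌉₊+2))
      (fun i hi => by simp [hvzero i hi])
  have hvm1s : Summable (fun i => Q i * (i:ℝ) * v i) :=
    summable_of_ne_finset_zero (s := Finset.range (⌈N⌉₊+2))
      (fun i hi => by simp [hvzero i hi])
  have hsingles : Summable (fun i : ℕ => if i = 1 then Q i * (i:ℝ) * (T/Q 1) else 0) :=
    summable_of_ne_finset_zero (s := {1}) (fun i hi => by
      simp only [Finset.mem_singleton] at hi
      simp [hi])
  have hvm : (∑' i : ℕ, Q i * (i:ℝ) * v i) = 0 := by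
    have hptw : ∀ i : ℕ, Q i * (i:ℝ) * v i
        = g1 i + (if i = 1 then Q i * (i:ℝ) * (T/Q 1) else 0) := by
      intro i
      simp only [hv, hg1, hf, mul_add, mul_ite, mul_zero]
    calc (∑' i : ℕ, Q i * (i:ℝ) * v i)
        = ∑' i : ℕ, (g1 i + (if i = 1 then Q i * (i:ℝ) * (T/Q 1) else 0)) :=
          tsum_congr hptw
      _ = (∑' i, g1 i) + ∑' i : ℕ, (if i = 1 then Q i * (i:ℝ) * (T/Q 1) else 0) :=
          Summable.tsum_add hg1s hsingles
      _ = (∑' i, g1 i) + T := by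
          rw [tsum_eq_single 1 (fun j hj => if_neg hj), if_pos rfl, Nat.cast_one]
          rw [mul_one, mul_comm (Q 1) (T / Q 1), div_mul_cancel₀ T hQ1.ne']
      _ = 0 := hmass'
  -- the eta norm of v
  set A1 : ℕ → ℝ := fun i => if 1 ≤ i ∧ (i:ℝ) ≤ N
      then Real.exp (η*N) * (Q i * (i:ℝ)^(1+k) * |u i|) else 0 with hA1
  set A2 : ℕ → ℝ := fun i => if i = 1 then Real.exp η * |T| else 0 with hA2
  have hA1s : Summable A1 :=
    summable_of_ne_finset_zero (s := Finset.range (⌈N⌉₊+2))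
      (fun i hi => by simp [hA1, if_neg (hfin i hi)])
  have hA2s : Summable A2 :=
    summable_of_ne_finset_zero (s := {1}) (fun i hi => by
      simp only [Finset.mem_singleton] at hi
      simp [hA2, hi])
  have hA1nn : ∀ i, 0 ≤ A1 i := by
    intro i
    by_cases h : 1 ≤ i ∧ (i:ℝ) ≤ N
    · simp only [hA1, if_pos h]
      exact mul_nonneg (Real.exp_pos _).le (hUterm i)
    · simp [hA1, if_neg h]
  have hveta : (∑' i : ℕ, Q i * Real.exp (η*i) * |v i|)
      ≤ Real.exp (η*N) * U + Real.exp η * (N^(-k)*U) := by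
    have hptw : ∀ i : ℕ, Q i * Real.exp (η*i) * |v i| ≤ A1 i + A2 i := by
      intro i
      rcases Nat.eq_zero_or_pos i with h0 | h0
      · subst h0
        simp [hv, hA1, hA2]
      · have hQip := hQ i h0
        have hi1 : (1:ℝ) ≤ (i:ℝ) := by exact_mod_cast h0
        have habsv : |v i| ≤ (if 1 ≤ i ∧ (i:ℝ) ≤ N then |u i| else 0)
            + (if i = 1 then |T| / Q 1 else 0) := by
          rw [hv]
          refine (abs_add_le _ _).trans (add_le_add ?_ ?_)
          · by_cases h : 1 ≤ i ∧ (i:ℝ) ≤ N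
            · rw [if_pos h, if_pos h]
            · rw [if_neg h, if_neg h, abs_zero]
          · by_cases h : i = 1
            · rw [if_pos h, if_pos h, abs_div, abs_of_pos hQ1]
            · rw [if_neg h, if_neg h, abs_zero]
        have hQe : (0:ℝ) < Q i * Real.exp (η*i) := by positivity
        have step := mul_le_mul_of_nonneg_left habsv hQe.le
        refine le_trans step ?_
        rw [mul_add]
        refine add_le_add ?_ ?_
        · by_cases h : 1 ≤ i ∧ (i:ℝ) ≤ N
          · simp only [hA1, if_pos h, mul_ite, mul_zero]
            have he1 : Real.exp (η*i) ≤ Real.exp (η*N) :=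
              Real.exp_le_exp.2 (by nlinarith [h.2, hη.le])
            have h1k := honele i h0
            have hb' : (0:ℝ) ≤ Q i * |u i| := mul_nonneg hQip.le (abs_nonneg _)
            have hmid : Q i * |u i| ≤ Q i * |u i| * (i:ℝ)^(1+k) := by
              have := mul_le_mul_of_nonneg_left h1k hb'
              rwa [mul_one] at this
            calc Q i * Real.exp (η*(i:ℝ)) * |u i| = (Q i * |u i|) * Real.exp (η*(i:ℝ)) := by
                  ring
              _ ≤ (Q i * |u i|) * Real.exp (η*N) := mul_le_mul_of_nonneg_left he1 hb'
              _ = Real.exp (η*N) * (Q i * |u i|) := by ring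
              _ ≤ Real.exp (η*N) * (Q i * |u i| * (i:ℝ)^(1+k)) :=
                  mul_le_mul_of_nonneg_left hmid (Real.exp_pos _).le
              _ = Real.exp (η*N) * (Q i * (i:ℝ)^(1+k) * |u i|) := by ring
          · simp [hA1, if_neg h]
        · by_cases h : i = 1
          · subst h
            simp only [hA2, if_pos rfl, mul_ite, mul_zero, Nat.cast_one, mul_one]
            have heq : Q 1 * Real.exp η * (|T| / Q 1) = Real.exp η * |T| := by
              field_simp
            exact le_of_eq heq
          · simp [hA2, h]
    calc (∑' i : ℕ, Q i * Real.exp (η*i) * |v i|)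
        ≤ ∑' i : ℕ, (A1 i + A2 i) := Summable.tsum_le_tsum hptw hvsη (hA1s.add hA2s)
      _ = (∑' i, A1 i) + ∑' i, A2 i := Summable.tsum_add hA1s hA2s
      _ ≤ Real.exp (η*N) * U + Real.exp η * (N^(-k)*U) := by
          gcongr
          · calc (∑' i, A1 i)
                ≤ ∑' i : ℕ, Real.exp (η*N) * (Q i * (i:ℝ)^(1+k) * |u i|) := by
                  refine Summable.tsum_le_tsum ?_ hA1s (hu.mul_left _)
                  intro i
                  by_cases h : 1 ≤ i ∧ (i:ℝ) ≤ N
                  · simp [hA1, if_pos h]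
                  · simp only [hA1, if_neg h]
                    exact mul_nonneg (Real.exp_pos _).le (hUterm i)
              _ = Real.exp (η*N) * U := tsum_mul_left
          · calc (∑' i, A2 i) = Real.exp η * |T| := by
                  rw [tsum_eq_single 1 (by intro b hb; simp [hA2, hb])]
                  simp [hA2]
              _ ≤ Real.exp η * (N^(-k)*U) :=
                  mul_le_mul_of_nonneg_left habsT (Real.exp_pos _).le
  -- the remainder w
  set w : ℕ → ℝ := fun i => u i - v i with hw
  have hvw : v + w = u := funext fun i => by simp [hw]
  have hSsplit : ∀ i, S t u i = S t v i + S t w i := by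
    intro i
    conv_lhs => rw [← hvw]
    rw [(hlin t ht).map_add]
    simp
  set B2 : ℕ → ℝ := fun i => if i = 1 then |T| else 0 with hB2
  have hB2s : Summable B2 :=
    summable_of_ne_finset_zero (s := {1}) (fun i hi => by
      simp only [Finset.mem_singleton] at hi
      simp [hB2, hi])
  have hw1ptw : ∀ i : ℕ, Q i * (i:ℝ) * |w i| ≤ |g2 i| + B2 i := by
    intro i
    rcases Nat.eq_zero_or_pos i with h0 | h0
    · subst h0
      simp only [Nat.cast_zero, mul_zero, zero_mul]
      have : (0:ℝ) ≤ B2 0 := by simp [hB2]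
      positivity
    · have hQip := hQ i h0
      have hi1 : (1:ℝ) ≤ (i:ℝ) := by exact_mod_cast h0
      by_cases h : 1 ≤ i ∧ (i:ℝ) ≤ N
      · have hwi : w i = -(if i = 1 then T/Q 1 else 0) := by
          simp [hw, hv, if_pos h]
        by_cases h1 : i = 1
        · subst h1
          rw [hwi, if_pos rfl, abs_neg, abs_div, abs_of_pos hQ1, Nat.cast_one, mul_one]
          have : Q 1 * (|T| / Q 1) = |T| := by field_simp
          rw [this]
          simp only [hB2, if_pos rfl]
          exact le_add_of_nonneg_left (abs_nonneg _)
        · rw [hwi, if_neg h1, neg_zero, abs_zero, mul_zero]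
          have : (0:ℝ) ≤ B2 i := by simp [hB2, h1]
          positivity
      · have hwi : w i = u i - (if i = 1 then T/Q 1 else 0) := by
          simp [hw, hv, if_neg h]
        have hg2i : |g2 i| = Q i * (i:ℝ) * |u i| := by
          rw [hg2]
          simp only [if_neg h]
          exact hfabs i
        have habsw : |w i| ≤ |u i| + (if i = 1 then |T| / Q 1 else 0) := by
          rw [hwi]
          refine (abs_sub _ _).trans ?_
          gcongr
          by_cases h1 : i = 1 <;> simp [h1, abs_div, abs_of_pos hQ1]
        have hQinn : (0:ℝ) < Q i * (i:ℝ) := by positivity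
        have step := mul_le_mul_of_nonneg_left habsw hQinn.le
        refine le_trans step ?_
        rw [mul_add, hg2i]
        refine add_le_add le_rfl ?_
        by_cases h1 : i = 1
        · subst h1
          simp only [hB2, if_pos rfl, mul_ite, mul_zero, Nat.cast_one, mul_one]
          have : Q 1 * (|T| / Q 1) = |T| := by field_simp
          exact le_of_eq this
        · simp [hB2, h1]
  have hw1s : Summable (fun i => Q i * (i:ℝ) * |w i|) :=
    Summable.of_nonneg_of_le (fun i => mul_nonneg (hQi i) (abs_nonneg _)) hw1ptw
      (hg2abss.add hB2s)
  have hwb : (∑' i : ℕ, Q i * (i:ℝ) * |w i|) ≤ 2*(N^(-k)*U) := by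
    calc (∑' i : ℕ, Q i * (i:ℝ) * |w i|)
        ≤ ∑' i : ℕ, (|g2 i| + B2 i) := Summable.tsum_le_tsum hw1ptw hw1s (hg2abss.add hB2s)
      _ = (∑' i, |g2 i|) + ∑' i, B2 i := Summable.tsum_add hg2abss hB2s
      _ ≤ N^(-k)*U + N^(-k)*U := by
          gcongr
          · calc (∑' i, |g2 i|)
                ≤ ∑' i : ℕ, N^(-k) * (Q i * (i:ℝ)^(1+k) * |u i|) :=
                  Summable.tsum_le_tsum hg2abs hg2abss (hu.mul_left _)
              _ = N^(-k)*U := tsum_mul_left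
          · calc (∑' i, B2 i) = |T| := by
                  rw [tsum_eq_single 1 (by intro b hb; simp [hB2, hb])]
                  simp [hB2]
              _ ≤ N^(-k)*U := habsT
      _ = 2*(N^(-k)*U) := by ring
  have hwm : (∑' i : ℕ, Q i * (i:ℝ) * w i) = 0 := by
    have : ∀ i : ℕ, Q i * (i:ℝ) * w i = f i - Q i * (i:ℝ) * v i := by
      intro i; rw [hw, hf]; ring
    rw [tsum_congr this, Summable.tsum_sub hfs hvm1s, hmass, hvm, sub_zero]
  obtain ⟨hsw, hbw⟩ := hX1 t ht w hw1s hwm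
  obtain ⟨hsv, hbv⟩ := EI.etaBound Q hQ η M lamη hM S hlin hX1 hXeta t ht v hv0 hvsη hvm
  obtain ⟨hsv1, -⟩ := hX1 t ht v hvs1 hvm
  obtain ⟨hsu1, -⟩ := hX1 t ht u hu1 hmass
  set F : ℕ → ℝ := fun i => if i = 0 then 0 else Q i * Real.exp (η * i) * |S t v i| with hF
  have hFnn : ∀ i, 0 ≤ F i := by
    intro i
    rcases Nat.eq_zero_or_pos i with h0 | h0
    · simp [hF, h0]
    · simp only [hF, if_neg (Nat.pos_iff_ne_zero.1 h0)]
      have := hQ i h0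
      positivity
  set I1 : ℕ → ℝ := fun i => if 2^n ≤ i then Q i * (i:ℝ) * |S t v i| else 0 with hI1
  set I2 : ℕ → ℝ := fun i => if 2^n ≤ i then Q i * (i:ℝ) * |S t w i| else 0 with hI2
  have httnn : ∀ (z : ℕ → ℝ) (i : ℕ), (0:ℝ) ≤ Q i * (i:ℝ) * |z i| :=
    fun z i => mul_nonneg (hQi i) (abs_nonneg _)
  have hind : ∀ (z : ℕ → ℝ) (i : ℕ),
      (0:ℝ) ≤ (if 2^n ≤ i then Q i * (i:ℝ) * |z i| else 0) := by
    intro z i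
    by_cases h : 2^n ≤ i
    · rw [if_pos h]; exact httnn z i
    · rw [if_neg h]
  have hindle : ∀ (z : ℕ → ℝ) (i : ℕ),
      (if 2^n ≤ i then Q i * (i:ℝ) * |z i| else 0) ≤ Q i * (i:ℝ) * |z i| := by
    intro z i
    by_cases h : 2^n ≤ i
    · rw [if_pos h]
    · rw [if_neg h]; exact httnn z i
  have hI1s : Summable I1 :=
    Summable.of_nonneg_of_le (fun i => hind (S t v) i) (fun i => hindle (S t v) i) hsv1
  have hI2s : Summable I2 :=
    Summable.of_nonneg_of_le (fun i => hind (S t w) i) (fun i => hindle (S t w) i) hsw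
  have htails : Summable (fun i : ℕ => if 2^n ≤ i then Q i * (i:ℝ) * |S t u i| else 0) :=
    Summable.of_nonneg_of_le (fun i => hind (S t u) i) (fun i => hindle (S t u) i) hsu1
  have step1 : (∑' i : ℕ, if 2^n ≤ i then Q i * (i:ℝ) * |S t u i| else 0)
      ≤ (∑' i, I1 i) + ∑' i, I2 i := by
    calc (∑' i : ℕ, if 2^n ≤ i then Q i * (i:ℝ) * |S t u i| else 0)
        ≤ ∑' i : ℕ, (I1 i + I2 i) := by
          refine Summable.tsum_le_tsum ?_ htails (hI1s.add hI2s)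
          intro i
          by_cases h : 2^n ≤ i
          · simp only [hI1, hI2, if_pos h]
            have h1 : |S t u i| ≤ |S t v i| + |S t w i| := by
              rw [hSsplit i]; exact abs_add_le _ _
            nlinarith [hQi i, abs_nonneg (S t u i)]
          · simp [hI1, hI2, if_neg h]
      _ = (∑' i, I1 i) + ∑' i, I2 i := Summable.tsum_add hI1s hI2s
  have h2n1 : (1:ℕ) ≤ 2^n := Nat.one_le_two_pow
  have h2nR : (0:ℝ) < (2:ℝ)^n := by positivity
  have step2 : (∑' i, I1 i) ≤ 2/η * Real.exp (-(η*2^n)/2) * ∑' i, F i := by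
    have hptw : ∀ i : ℕ, I1 i ≤ 2/η * Real.exp (-(η*2^n)/2) * F i := by
      intro i
      by_cases h : 2^n ≤ i
      · have hi1 : 1 ≤ i := le_trans h2n1 h
        have hine0 : i ≠ 0 := Nat.pos_iff_ne_zero.1 hi1
        have h2ni : ((2:ℝ)^n) ≤ (i:ℝ) := by
          have : ((2^n : ℕ):ℝ) ≤ (i:ℝ) := by exact_mod_cast h
          simpa using this
        have hx := EI.exp_aux hη (x := (i:ℝ)) (Nat.cast_nonneg i)
        have hsplitexp : Real.exp (η*(i:ℝ)/2)
            = Real.exp (η*(i:ℝ)) * Real.exp (-(η*(i:ℝ))/2) := by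
          rw [← Real.exp_add]; congr 1; ring
        have hmono : Real.exp (-(η*(i:ℝ))/2) ≤ Real.exp (-(η*2^n)/2) :=
          Real.exp_le_exp.2 (by nlinarith [h2ni, hη.le])
        have hchain : (i:ℝ) ≤ 2/η * (Real.exp (η*(i:ℝ)) * Real.exp (-(η*2^n)/2)) := by
          refine hx.trans ?_
          rw [hsplitexp]
          have h1 : Real.exp (η*(i:ℝ)) * Real.exp (-(η*(i:ℝ))/2)
              ≤ Real.exp (η*(i:ℝ)) * Real.exp (-(η*2^n)/2) :=
            mul_le_mul_of_nonneg_left hmono (Real.exp_pos _).le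
          have h2 : (0:ℝ) ≤ 2/η := by positivity
          exact mul_le_mul_of_nonneg_left h1 h2
        have hbase : (0:ℝ) ≤ Q i * |S t v i| :=
          mul_nonneg (hQ i hi1).le (abs_nonneg _)
        simp only [hI1, hF]
        rw [if_pos h, if_neg hine0]
        calc Q i * (i:ℝ) * |S t v i| = (Q i * |S t v i|) * (i:ℝ) := by ring
          _ ≤ (Q i * |S t v i|) * (2/η * (Real.exp (η*(i:ℝ)) * Real.exp (-(η*2^n)/2))) :=
              mul_le_mul_of_nonneg_left hchain hbase
          _ = 2/η * Real.exp (-(η*2^n)/2) * (Q i * Real.exp (η*(i:ℝ)) * |S t v i|) := by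
              ring
      · simp only [hI1]
        rw [if_neg h]
        have h1 := hFnn i
        positivity
    calc (∑' i, I1 i) ≤ ∑' i : ℕ, 2/η * Real.exp (-(η*2^n)/2) * F i :=
          Summable.tsum_le_tsum hptw hI1s (hsv.mul_left _)
      _ = 2/η * Real.exp (-(η*2^n)/2) * ∑' i, F i := tsum_mul_left
  have step3 : (∑' i, F i) ≤ M * Real.exp (-lamη*t)
      * (Real.exp (η*N)*U + Real.exp η*(N^(-k)*U)) :=
    hbv.trans (mul_le_mul_of_nonneg_left hveta (by positivity))
  have hI2b : (∑' i, I2 i) ≤ M * (2*(N^(-k)*U)) := by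
    calc (∑' i, I2 i) ≤ ∑' i : ℕ, Q i * (i:ℝ) * |S t w i| := by
          refine Summable.tsum_le_tsum ?_ hI2s hsw
          intro i
          exact hindle (S t w) i
      _ ≤ M * ∑' i : ℕ, Q i * (i:ℝ) * |w i| := hbw
      _ ≤ M * (2*(N^(-k)*U)) := mul_le_mul_of_nonneg_left hwb hM.le
  -- final algebra
  set X := Real.exp (-(η * 2^n)/4) * Real.exp (-(lamη*t)/2) with hX
  have hXnn : (0:ℝ) ≤ X := by positivity
  have hexpeq : Real.exp (-(η*2^n)/2) * (Real.exp (-lamη*t) * Real.exp (η*N)) = X := by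
    have harg : -(η*2^n)/2 + (-lamη*t + η*N) = -(η * 2^n)/4 + -(lamη*t)/2 := by
      rw [hN, hbdef]
      field_simp
      ring
    calc Real.exp (-(η*2^n)/2) * (Real.exp (-lamη*t) * Real.exp (η*N))
        = Real.exp (-(η*2^n)/2 + (-lamη*t + η*N)) := by
          rw [Real.exp_add, Real.exp_add]
      _ = Real.exp (-(η * 2^n)/4 + -(lamη*t)/2) := by rw [harg]
      _ = X := by rw [hX, Real.exp_add]
  have hle1 : Real.exp (-(η*2^n)/2) * Real.exp (-lamη*t) ≤ 1 := by
    rw [← Real.exp_add]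
    refine Real.exp_le_one_iff.2 ?_
    nlinarith [h2nR, hη, mul_nonneg hlam.le ht]
  have hI1b : (∑' i, I1 i) ≤ 2*M/η * (X*U) + (2*M/η*Real.exp η) * (N^(-k)*U) := by
    refine (step2.trans (mul_le_mul_of_nonneg_left step3 (by positivity))).trans ?_
    have hexpand : 2/η * Real.exp (-(η*2^n)/2)
          * (M * Real.exp (-lamη*t) * (Real.exp (η*N)*U + Real.exp η*(N^(-k)*U)))
        = 2*M/η * ((Real.exp (-(η*2^n)/2) * (Real.exp (-lamη*t) * Real.exp (η*N))) * U)
          + (2*M/η*Real.exp η)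
            * ((Real.exp (-(η*2^n)/2) * Real.exp (-lamη*t)) * (N^(-k)*U)) := by
      ring
    rw [hexpand, hexpeq]
    refine add_le_add le_rfl ?_
    have hNU : (0:ℝ) ≤ N^(-k)*U := mul_nonneg hNik hU0
    have h2 : (0:ℝ) ≤ 2*M/η*Real.exp η := by positivity
    have h3 := mul_le_mul_of_nonneg_right hle1 hNU
    rw [one_mul] at h3
    exact mul_le_mul_of_nonneg_left h3 h2
  have hXU : (0:ℝ) ≤ X*U := mul_nonneg hXnn hU0
  have hYU : (0:ℝ) ≤ N^(-k)*U := mul_nonneg hNik hU0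
  have hc1 : (0:ℝ) ≤ 2*M/η*Real.exp η + 2*M := by positivity
  have hc2 : (0:ℝ) ≤ 2*M/η := by positivity
  calc (∑' i : ℕ, if 2^n ≤ i then Q i * (i:ℝ) * |S t u i| else 0)
      ≤ (∑' i, I1 i) + ∑' i, I2 i := step1
    _ ≤ (2*M/η * (X*U) + (2*M/η*Real.exp η) * (N^(-k)*U)) + M * (2*(N^(-k)*U)) :=
        add_le_add hI1b hI2b
    _ ≤ (2*M/η*(1+Real.exp η) + 2*M) * U * (X + N^(-k)) := by
        nlinarith [mul_nonneg hc1 hXU, mul_nonneg hc2 hYU]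

end

lemma EI.pow_rpow (a : ℝ) (n : ℕ) : ((2:ℝ)^a)^n = (2:ℝ)^(a * n) := by
  rw [← Real.rpow_natCast ((2:ℝ)^a) n, ← Real.rpow_mul (by norm_num : (0:ℝ) ≤ 2)]

lemma EI.npow_rpow (n : ℕ) (a : ℝ) : ((2:ℝ)^n)^a = (2:ℝ)^((n:ℝ) * a) := by
  rw [← Real.rpow_natCast 2 n, ← Real.rpow_mul (by norm_num : (0:ℝ) ≤ 2)]

lemma EI.geomExpSummable (m η : ℝ) (hη : 0 < η) :
    Summable (fun n : ℕ => ((2:ℝ)^m)^n * Real.exp (-(η * 2^n)/4)) := by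
  set r := (2:ℝ)^m with hr
  have hr0 : 0 < r := Real.rpow_pos_of_pos (by norm_num) m
  refine summable_of_ratio_norm_eventually_le (r := 1/2) (by norm_num) ?_
  have htend : Tendsto (fun n : ℕ => Real.exp (-(η * 2^n)/4)) atTop (nhds 0) := by
    have h1 : Tendsto (fun n : ℕ => (2:ℝ)^n) atTop atTop :=
      tendsto_pow_atTop_atTop_of_one_lt (by norm_num)
    have h2 : Tendsto (fun n : ℕ => η * (2:ℝ)^n / 4) atTop atTop :=
      (h1.const_mul_atTop (by positivity)).atTop_div_const (by norm_num)
    have h3 : Tendsto (fun n : ℕ => -(η * (2:ℝ)^n) / 4) atTop atBot := by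
      have h4 : Tendsto (fun n : ℕ => -(η * (2:ℝ)^n / 4)) atTop atBot :=
        tendsto_neg_atBot_iff.2 h2
      refine h4.congr (fun n => by ring)
    exact Real.tendsto_exp_atBot.comp h3
  have hev : ∀ᶠ n : ℕ in atTop, Real.exp (-(η * 2^n)/4) < 1/(2*r) :=
    htend.eventually (gt_mem_nhds (by positivity))
  filter_upwards [hev] with n hn
  have e0 : (0:ℝ) < Real.exp (-(η * 2^n)/4) := Real.exp_pos _
  have hfn : (0:ℝ) ≤ r^n * Real.exp (-(η * 2^n)/4) := by positivity
  have hsucc : Real.exp (-(η * 2^(n+1))/4)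
      = Real.exp (-(η * 2^n)/4) * Real.exp (-(η * 2^n)/4) := by
    rw [← Real.exp_add]
    congr 1
    rw [pow_succ]
    ring
  rw [Real.norm_eq_abs, Real.norm_eq_abs, abs_of_nonneg (by positivity),
    abs_of_nonneg hfn]
  rw [pow_succ, hsucc]
  have key : r * Real.exp (-(η * 2^n)/4) ≤ 1/2 := by
    have := mul_le_mul_of_nonneg_left hn.le hr0.le
    calc r * Real.exp (-(η * 2^n)/4) ≤ r * (1/(2*r)) := this
      _ = 1/2 := by field_simp
  calc r^n * r * (Real.exp (-(η * 2^n)/4) * Real.exp (-(η * 2^n)/4))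
      = (r * Real.exp (-(η * 2^n)/4)) * (r^n * Real.exp (-(η * 2^n)/4)) := by ring
    _ ≤ 1/2 * (r^n * Real.exp (-(η * 2^n)/4)) :=
        mul_le_mul_of_nonneg_right key hfn

lemma EI.termBound (m k : ℝ) (hm : 0 < m) (hmk : m < k) (x : ℝ) (hx : 0 ≤ x) (n : ℕ) :
    ((2:ℝ)^m)^n * ((2:ℝ)^n/4 + x)^(-k)
      ≤ (4:ℝ)^k * ((2:ℝ)^(m-k))^n := by
  have h2n : (0:ℝ) < (2:ℝ)^n := by positivity
  have h1 : ((2:ℝ)^n/4 + x)^(-k) ≤ ((2:ℝ)^n/4)^(-k) :=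
    Real.rpow_le_rpow_of_nonpos (by positivity) (by linarith) (by linarith)
  have h2 : ((2:ℝ)^n/4)^(-k) = (4:ℝ)^k * ((2:ℝ)^n)^(-k) := by
    rw [Real.div_rpow h2n.le (by norm_num)]
    rw [Real.rpow_neg (by norm_num : (0:ℝ) ≤ 4)]
    field_simp
  have h3 : ((2:ℝ)^m)^n * ((2:ℝ)^n)^(-k) = ((2:ℝ)^(m-k))^n := by
    rw [EI.pow_rpow, EI.npow_rpow, EI.pow_rpow, ← Real.rpow_add (by norm_num : (0:ℝ) < 2)]
    congr 1
    ring
  have hr0 : (0:ℝ) ≤ ((2:ℝ)^m)^n := by positivity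
  calc ((2:ℝ)^m)^n * ((2:ℝ)^n/4 + x)^(-k)
      ≤ ((2:ℝ)^m)^n * ((2:ℝ)^n/4)^(-k) := mul_le_mul_of_nonneg_left h1 hr0
    _ = (4:ℝ)^k * (((2:ℝ)^m)^n * ((2:ℝ)^n)^(-k)) := by rw [h2]; ring
    _ = (4:ℝ)^k * ((2:ℝ)^(m-k))^n := by rw [h3]

lemma EI.sigmaSummable (m k : ℝ) (hm : 0 < m) (hmk : m < k) (x : ℝ) (hx : 0 ≤ x) :
    Summable (fun n : ℕ => ((2:ℝ)^m)^n * ((2:ℝ)^n/4 + x)^(-k)) := by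
  have hρ0 : (0:ℝ) ≤ (2:ℝ)^(m-k) := Real.rpow_nonneg (by norm_num) _
  have hρ1 : (2:ℝ)^(m-k) < 1 :=
    Real.rpow_lt_one_of_one_lt_of_neg (by norm_num) (by linarith)
  refine Summable.of_nonneg_of_le (fun n => ?_) (fun n => EI.termBound m k hm hmk x hx n)
    (((summable_geometric_of_lt_one hρ0 hρ1).mul_left _))
  have h2n : (0:ℝ) < (2:ℝ)^n := by positivity
  have : (0:ℝ) < (2:ℝ)^n/4 + x := by linarith
  positivity

set_option maxHeartbeats 1000000 in
lemma EI.sigmaBound (m k : ℝ) (hm : 0 < m) (hmk : m < k) (x : ℝ) (hx : 0 ≤ x) :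
    (∑' n : ℕ, ((2:ℝ)^m)^n * ((2:ℝ)^n/4 + x)^(-k))
      ≤ ((4:ℝ)^(k+m)/((2:ℝ)^m - 1) + (4:ℝ)^k/(1 - (2:ℝ)^(m-k))) * (1+x)^(m-k) := by
  set ρ := (2:ℝ)^(m-k) with hρ
  set r := (2:ℝ)^m with hrdef
  have hρ0 : (0:ℝ) ≤ ρ := Real.rpow_nonneg (by norm_num) _
  have hρ1 : ρ < 1 := Real.rpow_lt_one_of_one_lt_of_neg (by norm_num) (by linarith)
  have hr1 : 1 < r := by
    rw [hrdef]
    calc (1:ℝ) = (2:ℝ)^(0:ℝ) := by rw [Real.rpow_zero]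
      _ < (2:ℝ)^m := Real.rpow_lt_rpow_of_exponent_lt (by norm_num) hm
  have hr0 : (0:ℝ) < r := by linarith
  set P := 1 + x with hP
  have hP1 : (1:ℝ) ≤ P := by rw [hP]; linarith
  have hP0 : (0:ℝ) < P := by linarith
  set n₀ := Nat.log 2 ⌈P⌉₊ + 1 with hn₀
  have hceil0 : ⌈P⌉₊ ≠ 0 := by
    have : 0 < ⌈P⌉₊ := Nat.ceil_pos.2 hP0
    omega
  have hPle : P ≤ (2:ℝ)^n₀ := by
    have h1 : P ≤ (⌈P⌉₊:ℝ) := Nat.le_ceil P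
    have h2 : ⌈P⌉₊ < 2^n₀ := by
      rw [hn₀]
      exact Nat.lt_pow_succ_log_self (by norm_num) _
    have h3 : ((⌈P⌉₊:ℕ):ℝ) ≤ ((2^n₀ : ℕ):ℝ) := by exact_mod_cast h2.le
    calc P ≤ (⌈P⌉₊:ℝ) := h1
      _ ≤ ((2^n₀ : ℕ):ℝ) := h3
      _ = (2:ℝ)^n₀ := by push_cast; ring
  have h2n₀ : (2:ℝ)^n₀ ≤ 4*P := by
    have h1 : (2:ℕ)^(Nat.log 2 ⌈P⌉₊) ≤ ⌈P⌉₊ := Nat.pow_log_le_self 2 hceil0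
    have h2 : ((2:ℕ)^(Nat.log 2 ⌈P⌉₊):ℝ) ≤ (⌈P⌉₊:ℝ) := by exact_mod_cast h1
    have h3 : (⌈P⌉₊:ℝ) < P + 1 := Nat.ceil_lt_add_one hP0.le
    have h4 : (2:ℝ)^n₀ = 2 * (2:ℝ)^(Nat.log 2 ⌈P⌉₊) := by
      rw [hn₀, pow_succ]; ring
    have h5 : ((2:ℕ)^(Nat.log 2 ⌈P⌉₊):ℝ) = (2:ℝ)^(Nat.log 2 ⌈P⌉₊) := by push_cast; ring
    rw [h4, ← h5]
    nlinarith
  have hsum := EI.sigmaSummable m k hm hmk x hx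
  have hsplit := Summable.sum_add_tsum_nat_add n₀ hsum
  rw [← hsplit]
  -- Part 1
  have hpart1 : (∑ n ∈ Finset.range n₀, ((2:ℝ)^m)^n * ((2:ℝ)^n/4 + x)^(-k))
      ≤ (4:ℝ)^(k+m)/(r - 1) * P^(m-k) := by
    have hterm : ∀ n : ℕ, ((2:ℝ)^m)^n * ((2:ℝ)^n/4 + x)^(-k) ≤ r^n * (P/4)^(-k) := by
      intro n
      have h2n : (1:ℝ) ≤ (2:ℝ)^n := one_le_pow₀ (by norm_num)
      have hbase : P/4 ≤ (2:ℝ)^n/4 + x := by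
        rw [hP]; nlinarith
      have h1 : ((2:ℝ)^n/4 + x)^(-k) ≤ (P/4)^(-k) :=
        Real.rpow_le_rpow_of_nonpos (by positivity) hbase (by linarith)
      exact mul_le_mul_of_nonneg_left h1 (by positivity)
    calc (∑ n ∈ Finset.range n₀, ((2:ℝ)^m)^n * ((2:ℝ)^n/4 + x)^(-k))
        ≤ ∑ n ∈ Finset.range n₀, r^n * (P/4)^(-k) := Finset.sum_le_sum (fun n _ => hterm n)
      _ = (∑ n ∈ Finset.range n₀, r^n) * (P/4)^(-k) := by rw [← Finset.sum_mul]
      _ = (r^n₀ - 1)/(r - 1) * (P/4)^(-k) := by rw [geom_sum_eq hr1.ne' n₀]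
      _ ≤ r^n₀/(r - 1) * (P/4)^(-k) := by
          have hpk : (0:ℝ) ≤ (P/4)^(-k) := Real.rpow_nonneg (by positivity) _
          have : (r^n₀ - 1)/(r - 1) ≤ r^n₀/(r - 1) := by
            apply div_le_div_of_nonneg_right ?_ (by linarith)  -- maybe wrong name
            linarith
          exact mul_le_mul_of_nonneg_right this hpk
      _ ≤ (4:ℝ)^(k+m)/(r - 1) * P^(m-k) := by
          have hrn : r^n₀ ≤ (4:ℝ)^m * P^m := by
            have h1 : r^n₀ = ((2:ℝ)^n₀)^m := by
              rw [hrdef, EI.pow_rpow, EI.npow_rpow]; congr 1; ring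
            have h2 : ((2:ℝ)^n₀)^m ≤ (4*P)^m :=
              Real.rpow_le_rpow (by positivity) h2n₀ hm.le
            have h3 : ((4:ℝ)*P)^m = 4^m * P^m :=
              Real.mul_rpow (by norm_num) hP0.le
            rw [h1, ← h3]; exact h2
          have hp4 : (P/4)^(-k) = (4:ℝ)^k * P^(-k) := by
            rw [Real.div_rpow hP0.le (by norm_num), Real.rpow_neg hP0.le,
              Real.rpow_neg (by norm_num : (0:ℝ) ≤ 4)]
            field_simp
          have hPmk : P^m * P^(-k) = P^(m-k) := by
            rw [← Real.rpow_add hP0, sub_eq_add_neg]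
          have h4km : (4:ℝ)^m * (4:ℝ)^k = (4:ℝ)^(k+m) := by
            rw [← Real.rpow_add (by norm_num : (0:ℝ) < 4)]; congr 1; ring
          rw [hp4]
          have hPk0 : (0:ℝ) ≤ P^(-k) := Real.rpow_nonneg hP0.le _
          have hchain : r^n₀ * ((4:ℝ)^k * P^(-k)) ≤ (4:ℝ)^m * P^m * ((4:ℝ)^k * P^(-k)) :=
            mul_le_mul_of_nonneg_right hrn (by positivity)
          calc r^n₀/(r - 1) * ((4:ℝ)^k * P^(-k))
              = (r^n₀ * ((4:ℝ)^k * P^(-k)))/(r-1) := by ring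
            _ ≤ ((4:ℝ)^m * P^m * ((4:ℝ)^k * P^(-k)))/(r-1) := by
                apply div_le_div_of_nonneg_right ?_ (by linarith)
                exact hchain
            _ = (4:ℝ)^(k+m)/(r - 1) * P^(m-k) := by
                rw [← hPmk, ← h4km]; ring
  -- Part 2
  have hpart2 : (∑' n : ℕ, ((2:ℝ)^m)^(n + n₀) * ((2:ℝ)^(n + n₀)/4 + x)^(-k))
      ≤ (4:ℝ)^k/(1 - ρ) * P^(m-k) := by
    have hterm : ∀ n : ℕ, ((2:ℝ)^m)^(n + n₀) * ((2:ℝ)^(n + n₀)/4 + x)^(-k)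
        ≤ ((4:ℝ)^k * ρ^n₀) * ρ^n := by
      intro n
      calc ((2:ℝ)^m)^(n + n₀) * ((2:ℝ)^(n + n₀)/4 + x)^(-k)
          ≤ (4:ℝ)^k * ρ^(n + n₀) := EI.termBound m k hm hmk x hx (n + n₀)
        _ = ((4:ℝ)^k * ρ^n₀) * ρ^n := by rw [pow_add]; ring
    have hsum2 : Summable (fun n : ℕ => ((2:ℝ)^m)^(n + n₀) * ((2:ℝ)^(n + n₀)/4 + x)^(-k)) :=
      (summable_nat_add_iff n₀).2 hsum
    calc (∑' n : ℕ, ((2:ℝ)^m)^(n + n₀) * ((2:ℝ)^(n + n₀)/4 + x)^(-k))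
        ≤ ∑' n : ℕ, ((4:ℝ)^k * ρ^n₀) * ρ^n :=
          Summable.tsum_le_tsum hterm hsum2 ((summable_geometric_of_lt_one hρ0 hρ1).mul_left _)
      _ = ((4:ℝ)^k * ρ^n₀) * (1 - ρ)⁻¹ := by
          rw [tsum_mul_left, tsum_geometric_of_lt_one hρ0 hρ1]
      _ ≤ (4:ℝ)^k/(1 - ρ) * P^(m-k) := by
          have hρn₀ : ρ^n₀ ≤ P^(m-k) := by
            have h1 : ρ^n₀ = ((2:ℝ)^n₀)^(m-k) := by
              rw [hρ, EI.pow_rpow, EI.npow_rpow]; congr 1; ring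
            rw [h1]
            exact Real.rpow_le_rpow_of_nonpos hP0 hPle (by linarith)
          have h1ρ : (0:ℝ) < 1 - ρ := by linarith
          have h4k : (0:ℝ) ≤ (4:ℝ)^k := Real.rpow_nonneg (by norm_num) _
          calc ((4:ℝ)^k * ρ^n₀) * (1 - ρ)⁻¹ ≤ ((4:ℝ)^k * P^(m-k)) * (1 - ρ)⁻¹ := by
                have := mul_le_mul_of_nonneg_left hρn₀ h4k
                exact mul_le_mul_of_nonneg_right this (by positivity)
            _ = (4:ℝ)^k/(1 - ρ) * P^(m-k) := by ring
  have hP2 : (0:ℝ) ≤ P^(m-k) := Real.rpow_nonneg hP0.le _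
  calc (∑ n ∈ Finset.range n₀, ((2:ℝ)^m)^n * ((2:ℝ)^n/4 + x)^(-k))
        + (∑' n : ℕ, ((2:ℝ)^m)^(n + n₀) * ((2:ℝ)^(n + n₀)/4 + x)^(-k))
      ≤ (4:ℝ)^(k+m)/(r - 1) * P^(m-k) + (4:ℝ)^k/(1 - ρ) * P^(m-k) :=
        add_le_add hpart1 hpart2
    _ = ((4:ℝ)^(k+m)/((2:ℝ)^m - 1) + (4:ℝ)^k/(1 - (2:ℝ)^(m-k))) * P^(m-k) := by
        rw [← hrdef, ← hρ]; ring
    _ = ((4:ℝ)^(k+m)/((2:ℝ)^m - 1) + (4:ℝ)^k/(1 - (2:ℝ)^(m-k))) * (1+x)^(m-k) := by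
        rw [hP]

lemma EI.expPolyBound (p lam : ℝ) (hp : 0 < p) (hlam : 0 < lam) (t : ℝ) (ht : 0 ≤ t) :
    Real.exp (-(lam*t)/2) ≤ (1 + 2*p/lam)^p * (1+t)^(-p) := by
  set δ := lam/(2*p) with hδ
  have hδ0 : 0 < δ := by positivity
  have he := Real.add_one_le_exp (δ*t)
  have h3 : 1 ≤ Real.exp (δ*t) := Real.one_le_exp (by positivity)
  have h2 : t ≤ (1/δ) * Real.exp (δ*t) := by
    have h4 : δ*t ≤ Real.exp (δ*t) := by linarith
    have h5 := mul_le_mul_of_nonneg_left h4 (by positivity : (0:ℝ) ≤ 1/δ)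
    have h6 : (1/δ) * (δ*t) = t := by field_simp
    linarith
  have h1 : 1 + t ≤ (1 + 2*p/lam) * Real.exp (δ*t) := by
    have h7 : (1:ℝ)/δ = 2*p/lam := by rw [hδ]; rw [one_div_div]
    nlinarith
  have h4 : (1+t)^p ≤ (1 + 2*p/lam)^p * Real.exp (lam*t/2) := by
    have h8 : ((1 + 2*p/lam) * Real.exp (δ*t))^p
        = (1 + 2*p/lam)^p * (Real.exp (δ*t))^p :=
      Real.mul_rpow (by positivity) (Real.exp_pos _).le
    have h9 : (Real.exp (δ*t))^p = Real.exp (lam*t/2) := by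
      rw [Real.rpow_def_of_pos (Real.exp_pos _), Real.log_exp]
      congr 1
      rw [hδ]
      field_simp
    calc (1+t)^p ≤ ((1 + 2*p/lam) * Real.exp (δ*t))^p :=
          Real.rpow_le_rpow (by linarith) h1 hp.le
      _ = (1 + 2*p/lam)^p * Real.exp (lam*t/2) := by rw [h8, h9]
  have h1t : (0:ℝ) < (1+t)^p := Real.rpow_pos_of_pos (by linarith) _
  have h5 : Real.exp (-(lam*t)/2) * Real.exp (lam*t/2) = 1 := by
    rw [← Real.exp_add, show -(lam*t)/2 + lam*t/2 = 0 by ring, Real.exp_zero]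
  rw [Real.rpow_neg (by linarith : (0:ℝ) ≤ 1+t), ← div_eq_mul_inv, le_div_iff₀ h1t]
  calc Real.exp (-(lam*t)/2) * (1+t)^p
      ≤ Real.exp (-(lam*t)/2) * ((1 + 2*p/lam)^p * Real.exp (lam*t/2)) :=
        mul_le_mul_of_nonneg_left h4 (Real.exp_pos _).le
    _ = (1 + 2*p/lam)^p * (Real.exp (-(lam*t)/2) * Real.exp (lam*t/2)) := by ring
    _ = (1 + 2*p/lam)^p := by rw [h5, mul_one]
set_option maxHeartbeats 2000000 in
/-- Engler-type interpolation theorem: a family of linear operators which is uniformly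
bounded on `X₁ = ℓ¹(Q_i i)` and exponentially decaying on `X_η = ℓ¹(Q_i e^{ηi})` maps
`X_{1+k}` into `X_{1+m}` with polynomial decay `(1+t)^{-(k-m)}`.  All spaces carry the mass
constraint `∑ Q_i i u_i = 0`. -/
theorem engler_interpolation (Q : ℕ → ℝ) (hQ : ∀ i, 1 ≤ i → 0 < Q i)
    (η m k M lamη : ℝ) (hη : η ∈ Set.Ioo (0 : ℝ) 1) (hm : 0 < m) (hmk : m < k)
    (hM : 0 < M) (hlam : 0 < lamη)
    (S : ℝ → (ℕ → ℝ) → (ℕ → ℝ))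
    (hlin : ∀ t : ℝ, 0 ≤ t → IsLinearMap ℝ (S t))
    (hX1 : ∀ t : ℝ, 0 ≤ t → ∀ u : ℕ → ℝ,
      Summable (fun i => Q i * (i : ℝ) * |u i|) → (∑' i : ℕ, Q i * (i : ℝ) * u i) = 0 →
      Summable (fun i => Q i * (i : ℝ) * |S t u i|) ∧
        (∑' i : ℕ, Q i * (i : ℝ) * |S t u i|) ≤ M * ∑' i : ℕ, Q i * (i : ℝ) * |u i|)
    (hXeta : ∀ t : ℝ, 0 ≤ t → ∀ u : ℕ → ℝ,
      Summable (fun i => Q i * Real.exp (η * i) * |u i|) →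
        (∑' i : ℕ, Q i * (i : ℝ) * u i) = 0 →
      Summable (fun i => Q i * Real.exp (η * i) * |S t u i|) ∧
        (∑' i : ℕ, Q i * Real.exp (η * i) * |S t u i|) ≤
          M * Real.exp (-lamη * t) * ∑' i : ℕ, Q i * Real.exp (η * i) * |u i|) :
    ∃ C : ℝ, 0 < C ∧ ∀ t : ℝ, 0 ≤ t → ∀ u : ℕ → ℝ,
      Summable (fun i => Q i * (i : ℝ) ^ (1 + k) * |u i|) →
      (∑' i : ℕ, Q i * (i : ℝ) * u i) = 0 →
      Summable (fun i => Q i * (i : ℝ) ^ (1 + m) * |S t u i|) ∧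
        (∑' i : ℕ, Q i * (i : ℝ) ^ (1 + m) * |S t u i|) ≤
          C * (1 + t) ^ (-(k - m)) * ∑' i : ℕ, Q i * (i : ℝ) ^ (1 + k) * |u i| := by
  classical
  obtain ⟨hη0, hη1⟩ := hη
  have hk : 0 < k := lt_trans hm hmk
  set r := (2:ℝ)^m with hrdef
  have hr0 : (0:ℝ) < r := Real.rpow_pos_of_pos (by norm_num) m
  have hr1 : (1:ℝ) < r := by
    rw [hrdef]
    calc (1:ℝ) = (2:ℝ)^(0:ℝ) := by rw [Real.rpow_zero]
      _ < (2:ℝ)^m := Real.rpow_lt_rpow_of_exponent_lt (by norm_num) hm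
  have hρ1 : (2:ℝ)^(m-k) < 1 :=
    Real.rpow_lt_one_of_one_lt_of_neg (by norm_num) (by linarith)
  have hρ0 : (0:ℝ) ≤ (2:ℝ)^(m-k) := Real.rpow_nonneg (by norm_num) _
  set A := 2*M/η*(1+Real.exp η) + 2*M with hAdef
  have hA0 : (0:ℝ) < A := by positivity
  set b := lamη/(2*η) with hbdef
  have hb0 : (0:ℝ) < b := by positivity
  set p := k - m with hpdef
  have hp0 : (0:ℝ) < p := sub_pos.mpr hmk
  set C2 := ∑' n : ℕ, r^n * Real.exp (-(η*2^n)/4) with hC2def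
  have hC2nn : (0:ℝ) ≤ C2 := tsum_nonneg (fun n => by positivity)
  set C3 := (1 + 2*p/lamη)^p with hC3def
  have hC3nn : (0:ℝ) ≤ C3 := Real.rpow_nonneg (by positivity) _
  set Cσ := (4:ℝ)^(k+m)/((2:ℝ)^m - 1) + (4:ℝ)^k/(1 - (2:ℝ)^(m-k)) with hCσdef
  have hCσnn : (0:ℝ) ≤ Cσ := by
    apply add_nonneg
    · apply div_nonneg (Real.rpow_nonneg (by norm_num) _)
      rw [← hrdef]; linarith
    · exact div_nonneg (Real.rpow_nonneg (by norm_num) _) (by linarith)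
  have hmin0 : (0:ℝ) < min 1 b := lt_min one_pos hb0
  set C4 := Cσ * (min 1 b)^(m-k) with hC4def
  have hC4nn : (0:ℝ) ≤ C4 := mul_nonneg hCσnn (Real.rpow_nonneg hmin0.le _)
  refine ⟨r * A * (C2*C3 + C4) + 1, by positivity, ?_⟩
  intro t ht u hu hmass
  set U := ∑' i : ℕ, Q i * (i : ℝ) ^ (1 + k) * |u i| with hUdef
  have hQi : ∀ i : ℕ, (0:ℝ) ≤ Q i * (i:ℝ) := by
    intro i
    rcases Nat.eq_zero_or_pos i with h | h
    · simp [h]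
    · have h1 := hQ i h
      have h2 : (0:ℝ) < (i:ℝ) := by exact_mod_cast h
      positivity
  have hUterm : ∀ i : ℕ, (0:ℝ) ≤ Q i * (i:ℝ)^(1+k) * |u i| := by
    intro i
    rcases Nat.eq_zero_or_pos i with h | h
    · simp [h, Real.zero_rpow (by positivity : (1:ℝ)+k ≠ 0)]
    · have h1 := hQ i h
      have h2 : (0:ℝ) < (i:ℝ) := by exact_mod_cast h
      positivity
  have hU0 : (0:ℝ) ≤ U := tsum_nonneg hUterm
  have hSig_nn : ∀ i : ℕ, (0:ℝ) ≤ Q i * (i:ℝ)^(1+m) * |S t u i| := by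
    intro i
    rcases Nat.eq_zero_or_pos i with h | h
    · simp [h, Real.zero_rpow (by positivity : (1:ℝ)+m ≠ 0)]
    · have h1 := hQ i h
      have h2 : (0:ℝ) < (i:ℝ) := by exact_mod_cast h
      positivity
  have huptle : ∀ i : ℕ, Q i * (i:ℝ) * |u i| ≤ Q i * (i:ℝ)^(1+k) * |u i| := by
    intro i
    rcases Nat.eq_zero_or_pos i with h | h
    · simp [h, Real.zero_rpow (by positivity : (1:ℝ)+k ≠ 0)]
    · have h1 := (hQ i h).le
      have h2 : (1:ℝ) ≤ (i:ℝ) := by exact_mod_cast h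
      have h3 : (i:ℝ) ≤ (i:ℝ)^(1+k) := by
        calc (i:ℝ) = (i:ℝ)^(1:ℝ) := (Real.rpow_one _).symm
          _ ≤ (i:ℝ)^(1+k) := Real.rpow_le_rpow_of_exponent_le h2 (by linarith)
      nlinarith [mul_nonneg h1 (abs_nonneg (u i))]
  have hu1 : Summable (fun i : ℕ => Q i * (i:ℝ) * |u i|) :=
    Summable.of_nonneg_of_le (fun i => mul_nonneg (hQi i) (abs_nonneg _)) huptle hu
  obtain ⟨hsu1, -⟩ := hX1 t ht u hu1 hmass
  -- the double array
  set G : ℕ → ℕ → ℝ := fun n i =>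
    if 2^n ≤ i then r^n * (Q i * (i:ℝ) * |S t u i|) else 0 with hGdef
  have hGnn : ∀ n i, (0:ℝ) ≤ G n i := by
    intro n i
    simp only [hGdef]
    by_cases h : 2^n ≤ i
    · rw [if_pos h]
      exact mul_nonneg (by positivity) (mul_nonneg (hQi i) (abs_nonneg _))
    · rw [if_neg h]
  have hGs : ∀ n, Summable (fun i => G n i) := by
    intro n
    refine Summable.of_nonneg_of_le (hGnn n) (fun i => ?_) (hsu1.mul_left (r^n))
    simp only [hGdef]
    by_cases h : 2^n ≤ i
    · rw [if_pos h]
    · rw [if_neg h]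
      exact mul_nonneg (by positivity) (mul_nonneg (hQi i) (abs_nonneg _))
  have hGis : ∀ i, Summable (fun n => G n i) := by
    intro i
    apply summable_of_ne_finset_zero (s := Finset.range (i+1))
    intro n hn
    simp only [Finset.mem_range, not_lt] at hn
    have h1 : i < 2^n := lt_of_lt_of_le (lt_of_lt_of_le Nat.lt_two_pow_self 
      (Nat.pow_le_pow_right (by norm_num) (by omega))) le_rfl
    simp only [hGdef]
    rw [if_neg (by omega)]
  -- per-scale bounds
  set β : ℕ → ℝ := fun n => A * U * ((r^n * Real.exp (-(η*2^n)/4)) * Real.exp (-(lamη*t)/2)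
      + r^n * (((2:ℝ)^n/4 + b*t)^(-k))) with hβdef
  have hgeos : Summable (fun n : ℕ => r^n * Real.exp (-(η*2^n)/4)) := by
    rw [hrdef]; exact EI.geomExpSummable m η hη0
  have hsig : Summable (fun n : ℕ => r^n * (((2:ℝ)^n/4 + b*t)^(-k))) := by
    rw [hrdef]; exact EI.sigmaSummable m k hm hmk (b*t) (by positivity)
  have hβs : Summable β := ((hgeos.mul_right _).add hsig).mul_left (A*U)
  have hGle : ∀ n, (∑' i, G n i) ≤ β n := by
    intro n
    have htb := EI.tailBound Q η k M lamη hQ hη0 hk hM hlam S hlin hX1 hXeta t ht u hu hmass n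
    have heq : (∑' i, G n i) = r^n * ∑' i : ℕ, (if 2^n ≤ i then Q i * (i:ℝ) * |S t u i| else 0) := by
      rw [← tsum_mul_left]
      refine tsum_congr (fun i => ?_)
      simp only [hGdef]
      by_cases h : 2^n ≤ i
      · rw [if_pos h, if_pos h]
      · rw [if_neg h, if_neg h, mul_zero]
    rw [heq]
    calc r^n * ∑' i : ℕ, (if 2^n ≤ i then Q i * (i:ℝ) * |S t u i| else 0)
        ≤ r^n * ((2*M/η*(1+Real.exp η) + 2*M) * U
            * (Real.exp (-(η * 2^n)/4) * Real.exp (-(lamη*t)/2)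
              + ((2:ℝ)^n/4 + lamη/(2*η)*t)^(-k))) :=
          mul_le_mul_of_nonneg_left htb (by positivity)
      _ = β n := by rw [hβdef, hAdef, hbdef]; ring
  -- pointwise bound
  have hptw : ∀ i : ℕ, Q i * (i:ℝ)^(1+m) * |S t u i| ≤ r * ∑' n, G n i := by
    intro i
    rcases Nat.eq_zero_or_pos i with h0 | h0
    · subst h0
      have hG0 : ∀ n, G n 0 = 0 := by
        intro n
        simp only [hGdef]
        rw [if_neg (fun hcon => absurd (le_trans Nat.one_le_two_pow hcon) (by norm_num))]
      rw [tsum_congr hG0, tsum_zero, mul_zero]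
      simp [Real.zero_rpow (by positivity : (1:ℝ)+m ≠ 0)]
    · set J := Nat.log 2 i with hJ
      have hJ1 : 2^J ≤ i := Nat.pow_log_le_self 2 (by omega)
      have hJ2 : i < 2^(J+1) := Nat.lt_pow_succ_log_self (by norm_num) i
      have hipos : (0:ℝ) < (i:ℝ) := by exact_mod_cast h0
      have hQabs : (0:ℝ) ≤ Q i * |S t u i| := mul_nonneg (hQ i h0).le (abs_nonneg _)
      have him : (i:ℝ)^m ≤ r * r^J := by
        have h1 : (i:ℝ) ≤ ((2:ℝ)^(J+1)) := by
          have := hJ2.le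
          have h2 : ((i:ℕ):ℝ) ≤ ((2^(J+1) : ℕ):ℝ) := by exact_mod_cast this
          calc (i:ℝ) ≤ ((2^(J+1) : ℕ):ℝ) := h2
            _ = (2:ℝ)^(J+1) := by push_cast; ring
        have h2 : (i:ℝ)^m ≤ ((2:ℝ)^(J+1))^m :=
          Real.rpow_le_rpow hipos.le h1 hm.le
        have h3 : ((2:ℝ)^(J+1))^m = r * r^J := by
          rw [EI.npow_rpow, hrdef, EI.pow_rpow, ← Real.rpow_add (by norm_num : (0:ℝ) < 2)]
          congr 1
          push_cast
          ring
        rw [h3] at h2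
        exact h2
      have hsplit : (i:ℝ)^(1+m) = (i:ℝ) * (i:ℝ)^m := by
        rw [Real.rpow_add hipos, Real.rpow_one]
      have hGJ : G J i = r^J * (Q i * (i:ℝ) * |S t u i|) := by
        simp only [hGdef]
        rw [if_pos hJ1]
      have hle := Summable.le_tsum (hGis i) J (fun n _ => hGnn n i)
      rw [hGJ] at hle
      calc Q i * (i:ℝ)^(1+m) * |S t u i|
          = (Q i * |S t u i| * (i:ℝ)) * (i:ℝ)^m := by rw [hsplit]; ring
        _ ≤ (Q i * |S t u i| * (i:ℝ)) * (r * r^J) := by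
            apply mul_le_mul_of_nonneg_left him
            exact mul_nonneg hQabs hipos.le
        _ = r * (r^J * (Q i * (i:ℝ) * |S t u i|)) := by ring
        _ ≤ r * ∑' n, G n i := mul_le_mul_of_nonneg_left hle hr0.le
  -- partial sums
  have hpartial : ∀ sn : ℕ,
      (∑ i ∈ Finset.range sn, Q i * (i:ℝ)^(1+m) * |S t u i|) ≤ r * ∑' n, β n := by
    intro sn
    have hswap := Summable.tsum_finsetSum (f := fun (i : ℕ) (n : ℕ) => G n i) (s := Finset.range sn)
      (fun i _ => hGis i)
    calc (∑ i ∈ Finset.range sn, Q i * (i:ℝ)^(1+m) * |S t u i|)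
        ≤ ∑ i ∈ Finset.range sn, r * ∑' n, G n i :=
          Finset.sum_le_sum (fun i _ => hptw i)
      _ = r * ∑ i ∈ Finset.range sn, ∑' n, G n i := by rw [Finset.mul_sum]
      _ = r * ∑' n, ∑ i ∈ Finset.range sn, G n i := by rw [← hswap]
      _ ≤ r * ∑' n, β n := by
          apply mul_le_mul_of_nonneg_left ?_ hr0.le
          refine Summable.tsum_le_tsum (fun n => ?_) (summable_sum (fun i _ => hGis i)) hβs
          exact (Summable.sum_le_tsum _ (fun i _ => hGnn n i) (hGs n)).trans (hGle n)
  have hsummable : Summable (fun i : ℕ => Q i * (i:ℝ)^(1+m) * |S t u i|) :=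
    summable_of_sum_range_le hSig_nn hpartial
  refine ⟨hsummable, ?_⟩
  have htsumle : (∑' i : ℕ, Q i * (i:ℝ)^(1+m) * |S t u i|) ≤ r * ∑' n, β n :=
    Summable.tsum_le_of_sum_range_le hsummable hpartial
  -- bound the β series
  have h1t : (0:ℝ) < 1 + t := by linarith
  have h1tp : (0:ℝ) ≤ (1+t)^(m-k) := Real.rpow_nonneg h1t.le _
  have hβtot : (∑' n, β n) ≤ A * U * ((C2*C3 + C4) * (1+t)^(m-k)) := by
    have hsplit : (∑' n, β n) = A * U * (C2 * Real.exp (-(lamη*t)/2)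
        + ∑' n : ℕ, r^n * (((2:ℝ)^n/4 + b*t)^(-k))) := by
      rw [hβdef, tsum_mul_left]
      congr 1
      rw [Summable.tsum_add (hgeos.mul_right _) hsig, tsum_mul_right, hC2def]
    rw [hsplit]
    have hminle : min 1 b * (1+t) ≤ 1 + b*t := by
      have h1 := min_le_left (1:ℝ) b
      have h2 := min_le_right (1:ℝ) b
      nlinarith [hmin0.le]
    have hrpowle : (1+b*t)^(m-k) ≤ (min 1 b)^(m-k) * (1+t)^(m-k) := by
      have h1 : (1+b*t)^(m-k) ≤ (min 1 b * (1+t))^(m-k) :=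
        Real.rpow_le_rpow_of_nonpos (by positivity) hminle (by linarith)
      have h2 : (min 1 b * (1+t))^(m-k) = (min 1 b)^(m-k) * (1+t)^(m-k) :=
        Real.mul_rpow hmin0.le h1t.le
      linarith [h1, h2.le, h2.ge]
    have hσ : (∑' n : ℕ, r^n * (((2:ℝ)^n/4 + b*t)^(-k))) ≤ C4 * (1+t)^(m-k) := by
      calc (∑' n : ℕ, r^n * (((2:ℝ)^n/4 + b*t)^(-k)))
          ≤ Cσ * (1+b*t)^(m-k) := by
            rw [hrdef, hCσdef]
            exact EI.sigmaBound m k hm hmk (b*t) (by positivity)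
        _ ≤ Cσ * ((min 1 b)^(m-k) * (1+t)^(m-k)) :=
            mul_le_mul_of_nonneg_left hrpowle hCσnn
        _ = C4 * (1+t)^(m-k) := by rw [hC4def]; ring
    have hexp : C2 * Real.exp (-(lamη*t)/2) ≤ C2 * C3 * (1+t)^(m-k) := by
      have h1 := EI.expPolyBound p lamη hp0 hlam t ht
      have h2 : (1+t)^(-p) = (1+t)^(m-k) := by
        congr 1
        rw [hpdef]; ring
      rw [h2, ← hC3def] at h1
      calc C2 * Real.exp (-(lamη*t)/2) ≤ C2 * (C3 * (1+t)^(m-k)) :=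
            mul_le_mul_of_nonneg_left h1 hC2nn
        _ = C2 * C3 * (1+t)^(m-k) := by ring
    have hsum2 : C2 * Real.exp (-(lamη*t)/2)
        + (∑' n : ℕ, r^n * (((2:ℝ)^n/4 + b*t)^(-k)))
        ≤ (C2*C3 + C4) * (1+t)^(m-k) := by
      have := add_le_add hexp hσ
      calc C2 * Real.exp (-(lamη*t)/2) + (∑' n : ℕ, r^n * (((2:ℝ)^n/4 + b*t)^(-k)))
          ≤ C2 * C3 * (1+t)^(m-k) + C4 * (1+t)^(m-k) := this
        _ = (C2*C3 + C4) * (1+t)^(m-k) := by ring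
    exact mul_le_mul_of_nonneg_left hsum2 (by positivity)
  have hfinal : r * (∑' n, β n) ≤ (r * A * (C2*C3 + C4)) * ((1+t)^(m-k) * U) := by
    calc r * (∑' n, β n) ≤ r * (A * U * ((C2*C3 + C4) * (1+t)^(m-k))) :=
          mul_le_mul_of_nonneg_left hβtot hr0.le
      _ = (r * A * (C2*C3 + C4)) * ((1+t)^(m-k) * U) := by ring
  have hmk2 : -(k - m) = m - k := by ring
  rw [show (1+t)^(-(k-m)) = (1+t)^(m-k) by rw [hmk2]]
  have hcoef : (r * A * (C2*C3 + C4)) * ((1+t)^(m-k) * U)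
      ≤ (r * A * (C2*C3 + C4) + 1) * ((1+t)^(m-k) * U) := by
    have : (0:ℝ) ≤ (1+t)^(m-k) * U := mul_nonneg h1tp hU0
    nlinarith
  calc (∑' i : ℕ, Q i * (i:ℝ)^(1+m) * |S t u i|) ≤ r * ∑' n, β n := htsumle
    _ ≤ (r * A * (C2*C3 + C4)) * ((1+t)^(m-k) * U) := hfinal
    _ ≤ (r * A * (C2*C3 + C4) + 1) * ((1+t)^(m-k) * U) := hcoef
    _ = (r * A * (C2*C3 + C4) + 1) * (1+t)^(m-k) * U := by ring
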